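/- Let G = (V, c) be a finite connected weighted graph (c symmetric, nonnegative, zero diagonal) with normalized Laplacian Δ(x,y) = δ_x(y) - c(x,y)/c_x where c_x = Σ_y c(x,y) > 0. Then for any y ∈ V, the determinant of the restriction of Δ to (V \ {y}) × (V \ {y}) is strictly positive. -/

import Mathlib

noncomputable def deg {W : Type*} [Fintype W] (c : W → W → ℝ) (x : W) : ℝ := ∑ y, c x y

def IsWeight {W : Type*} (c : W → W → ℝ) : Prop :=
  (∀ x y, 0 ≤ c x y) ∧ (∀ x y, c x y = c y x) ∧ (∀ x, c x x = 0)

def Conn {W : Type*} (c : W → W → ℝ) : Prop :=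
  ∀ x y, Relation.ReflTransGen (fun a b => 0 < c a b) x y

noncomputable def lap {W : Type*} [Fintype W] (c : W → W → ℝ) (φ : W → ℝ) (x : W) : ℝ :=
  φ x - ∑ y, (c x y / deg c x) * φ y

def IsDirichlet {W : Type*} [Fintype W] [DecidableEq W] (c : W → W → ℝ) (x y : W)
    (φ : W → ℝ) : Prop :=
  (∀ z, lap c φ z =
      (if z = x then 1 / deg c x else 0) - (if z = y then 1 / deg c y else 0)) ∧
  φ y = 0

def IsEffRes {W : Type*} [Fintype W] [DecidableEq W] (c : W → W → ℝ) (R : W → W → ℝ) : Prop :=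
  (∀ x, R x x = 0) ∧ ∀ x y, x ≠ y → ∃ φ, IsDirichlet c x y φ ∧ φ x = R x y

noncomputable def lapM {W : Type*} [Fintype W] [DecidableEq W] (c : W → W → ℝ) :
    Matrix W W ℝ :=
  Matrix.of fun x z => (if x = z then (1 : ℝ) else 0) - c x z / deg c x

/-! Auxiliary lemmas -/

lemma sum_split {V : Type*} [Fintype V] [DecidableEq V] (y : V) (f : V → ℝ) :
    ∑ x, f x = f y + ∑ a : {z : V // z ≠ y}, f a.1 := by
  rw [← Finset.add_sum_erase _ f (Finset.mem_univ y)]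
  congr 1
  rw [← Finset.sum_subtype (Finset.univ.erase y) (fun x => by simp) f]

lemma quad_eq {V : Type*} [Fintype V] [DecidableEq V] (c : V → V → ℝ)
    (hsymm : ∀ x y, c x y = c y x) (u : V → ℝ) :
    ∑ x, ∑ z, u x * ((if x = z then deg c x else 0) - c x z) * u z
      = (1/2) * ∑ x, ∑ z, c x z * (u x - u z)^2 := by
  have hA : ∀ x : V, deg c x * u x ^ 2 = ∑ z, c x z * u x ^ 2 := by
    intro x; rw [deg, Finset.sum_mul]
  have hL : ∑ x, ∑ z, u x * ((if x = z then deg c x else 0) - c x z) * u z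
      = (∑ x, deg c x * u x ^ 2) - ∑ x, ∑ z, c x z * (u x * u z) := by
    rw [← Finset.sum_sub_distrib]
    refine Finset.sum_congr rfl fun x _ => ?_
    have : ∀ z, u x * ((if x = z then deg c x else 0) - c x z) * u z
        = (if x = z then deg c x * u x ^ 2 else 0) - c x z * (u x * u z) := by
      intro z
      by_cases h : x = z
      · subst h; ring_nf; simp; ring
      · simp [h]; ring
    simp only [this, Finset.sum_sub_distrib, Finset.sum_ite_eq, Finset.mem_univ, if_true]
  have hswap : ∑ x, ∑ z, c x z * u z ^ 2 = ∑ x, deg c x * u x ^ 2 := by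
    rw [Finset.sum_comm]
    refine Finset.sum_congr rfl fun z _ => ?_
    rw [hA z]
    exact Finset.sum_congr rfl fun x _ => by rw [hsymm]
  have hR : ∑ x, ∑ z, c x z * (u x - u z)^2
      = (∑ x, deg c x * u x ^ 2) + (∑ x, deg c x * u x ^ 2)
        - 2 * ∑ x, ∑ z, c x z * (u x * u z) := by
    have : ∀ x z : V, c x z * (u x - u z)^2
        = c x z * u x ^ 2 + c x z * u z ^ 2 - 2 * (c x z * (u x * u z)) := by
      intro x z; ring
    simp only [this, Finset.sum_sub_distrib, Finset.sum_add_distrib, ← Finset.mul_sum]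
    rw [hswap]
    congr 1
    refine congrArg₂ _ ?_ rfl
    exact Finset.sum_congr rfl fun x _ => (hA x).symm
  rw [hL, hR]; ring

theorem stmt5 {V : Type*} [Fintype V] [DecidableEq V] (c : V → V → ℝ)
    (hw : IsWeight c) (hconn : Conn c) (hdeg : ∀ x, 0 < deg c x) (y : V) :
    0 < (Matrix.of fun a b : {z : V // z ≠ y} => lapM c a.1 b.1).det := by
  obtain ⟨hnn, hsymm, hdiag⟩ := hw
  set W := {z : V // z ≠ y}
  set Lsub : Matrix W W ℝ :=
    Matrix.of (fun a b : W => (if a.1 = b.1 then deg c a.1 else 0) - c a.1 b.1) with hLsub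
  -- positive definiteness of Lsub
  have hposdef : Lsub.PosDef := by
    rw [Matrix.posDef_iff_dotProduct_mulVec]
    constructor
    · ext a b
      simp only [hLsub, Matrix.conjTranspose_apply, Matrix.of_apply, star_trivial]
      by_cases h : a = b
      · subst h; simp
      · have h1 : a.1 ≠ b.1 := fun hh => h (Subtype.ext hh)
        rw [if_neg (Ne.symm h1), if_neg h1, hsymm]
    · intro v hv
      set u : V → ℝ := fun x => if h : x ≠ y then v ⟨x, h⟩ else 0 with hu
      have huy : u y = 0 := by simp [hu]
      have hua : ∀ a : W, u a.1 = v a := by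
        intro a; simp [hu, a.2]
      have hquadW : dotProduct (star v) (Lsub.mulVec v)
          = ∑ x, ∑ z, u x * ((if x = z then deg c x else 0) - c x z) * u z := by
        rw [sum_split y]
        simp only [huy, zero_mul, Finset.sum_const_zero, zero_add]
        rw [dotProduct, star_trivial]
        refine Finset.sum_congr rfl fun a _ => ?_
        rw [sum_split y (fun z => u a.1 * ((if a.1 = z then deg c a.1 else 0) - c a.1 z) * u z)]
        simp only [huy, mul_zero, zero_add]
        rw [Matrix.mulVec, dotProduct, Finset.mul_sum]
        refine Finset.sum_congr rfl fun b _ => ?_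
        rw [hua, hua, hLsub]
        simp only [Matrix.of_apply]
        ring
      rw [hquadW, quad_eq c hsymm u]
      have hterm_nn : ∀ x z : V, 0 ≤ c x z * (u x - u z)^2 :=
        fun x z => mul_nonneg (hnn x z) (sq_nonneg _)
      have hsum_nn : 0 ≤ ∑ x, ∑ z, c x z * (u x - u z)^2 :=
        Finset.sum_nonneg fun x _ => Finset.sum_nonneg fun z _ => hterm_nn x z
      rcases lt_or_eq_of_le hsum_nn with h | h
      · positivity
      · exfalso
        -- every term is zero
        have hzero : ∀ x z : V, c x z * (u x - u z)^2 = 0 := by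
          intro x z
          have h1 := (Finset.sum_eq_zero_iff_of_nonneg
            (fun x _ => Finset.sum_nonneg fun z _ => hterm_nn x z)).mp h.symm x (Finset.mem_univ x)
          exact (Finset.sum_eq_zero_iff_of_nonneg
            (fun z _ => hterm_nn x z)).mp h1 z (Finset.mem_univ z)
        have hedge : ∀ x z : V, 0 < c x z → u x = u z := by
          intro x z hc
          have := hzero x z
          rcases mul_eq_zero.mp this with h' | h'
          · exact absurd h' hc.ne'
          · have := pow_eq_zero_iff (n := 2) (by norm_num) |>.mp h'
            linarith [sub_eq_zero.mp this]
        have key : ∀ p q : V, Relation.ReflTransGen (fun a b => 0 < c a b) p q →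
            u p = u q := by
          intro p q hpq
          induction hpq with
          | refl => rfl
          | tail _ hbc ih => rw [ih, hedge _ _ hbc]
        have huzero : ∀ x : V, u x = 0 := fun x => by rw [key x y (hconn x y), huy]
        exact hv (funext fun a => by rw [← hua a, huzero]; simp)
  -- factor the matrix
  have hfact : (Matrix.of fun a b : W => lapM c a.1 b.1)
      = Matrix.diagonal (fun a : W => (deg c a.1)⁻¹) * Lsub := by
    ext a b
    rw [Matrix.diagonal_mul]
    simp only [Matrix.of_apply, lapM, hLsub]
    rw [mul_sub, mul_ite, inv_mul_cancel₀ (hdeg a.1).ne', mul_zero, div_eq_inv_mul]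
  rw [hfact, Matrix.det_mul, Matrix.det_diagonal]
  exact mul_pos (Finset.prod_pos fun a _ => inv_pos.mpr (hdeg a.1)) hposdef.det_pos
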